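/- Let α ∈ ℝ^{N×N} be a bi-stochastic matrix with mixing constant λ(α). Then for every probability vector w ∈ ℝ^N (i.e. w has nonnegative entries summing to 1), ‖αw‖² ≤ (1 − λ(α)²)/N + λ(α)² ‖w‖², where ‖·‖ is the Euclidean norm. -/

import Mathlib

open scoped BigOperators

/-- The Euclidean norm of a vector in `ℝ^N`. -/
noncomputable def eucNorm {N : ℕ} (v : Fin N → ℝ) : ℝ := Real.sqrt (∑ i, v i ^ 2)

/-- A matrix is bi-stochastic if it has nonnegative entries and every row sum and
every column sum equals `1`. -/
def BiStochastic {N : ℕ} (α : Matrix (Fin N) (Fin N) ℝ) : Prop :=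
  (∀ i j, 0 ≤ α i j) ∧ (∀ i, ∑ j, α i j = 1) ∧ (∀ j, ∑ i, α i j = 1)

/-- The mixing constant `λ(α) = sup { ‖αv‖ : ‖v‖ = 1, ⟨v, 1⟩ = 0 }`. -/
noncomputable def mixConst {N : ℕ} (α : Matrix (Fin N) (Fin N) ℝ) : ℝ :=
  sSup {r : ℝ | ∃ v : Fin N → ℝ, eucNorm v = 1 ∧ (∑ i, v i) = 0 ∧ r = eucNorm (α.mulVec v)}

lemma eucNorm_sq {N : ℕ} (v : Fin N → ℝ) : eucNorm v ^ 2 = ∑ i, v i ^ 2 :=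
  Real.sq_sqrt (Finset.sum_nonneg fun i _ => sq_nonneg _)

lemma eucNorm_nonneg {N : ℕ} (v : Fin N → ℝ) : 0 ≤ eucNorm v := Real.sqrt_nonneg _

lemma contraction {N : ℕ} (α : Matrix (Fin N) (Fin N) ℝ) (hα : BiStochastic α)
    (v : Fin N → ℝ) : ∑ i, (α.mulVec v i) ^ 2 ≤ ∑ j, v j ^ 2 := by
  obtain ⟨hpos, hrow, hcol⟩ := hα
  have key : ∀ i, (α.mulVec v i) ^ 2 ≤ ∑ j, α i j * v j ^ 2 := by
    intro i
    have h := Finset.sum_mul_sq_le_sq_mul_sq Finset.univ (fun j => Real.sqrt (α i j))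
      (fun j => Real.sqrt (α i j) * v j)
    have h1 : ∀ j, Real.sqrt (α i j) * (Real.sqrt (α i j) * v j) = α i j * v j := by
      intro j; rw [← mul_assoc, Real.mul_self_sqrt (hpos i j)]
    have h2 : ∀ j, Real.sqrt (α i j) ^ 2 = α i j := fun j => Real.sq_sqrt (hpos i j)
    have h3 : ∀ j, (Real.sqrt (α i j) * v j) ^ 2 = α i j * v j ^ 2 := by
      intro j; rw [mul_pow, Real.sq_sqrt (hpos i j)]
    simp only [h1, h2, h3] at h
    calc (α.mulVec v i) ^ 2 = (∑ j, α i j * v j) ^ 2 := by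
          simp [Matrix.mulVec, dotProduct]
      _ ≤ (∑ j, α i j) * ∑ j, α i j * v j ^ 2 := h
      _ = ∑ j, α i j * v j ^ 2 := by rw [hrow i, one_mul]
  calc ∑ i, (α.mulVec v i) ^ 2 ≤ ∑ i, ∑ j, α i j * v j ^ 2 :=
        Finset.sum_le_sum fun i _ => key i
    _ = ∑ j, (∑ i, α i j) * v j ^ 2 := by
        rw [Finset.sum_comm]; simp [Finset.sum_mul]
    _ = ∑ j, v j ^ 2 := by simp [hcol]

lemma eucNorm_mulVec_le {N : ℕ} (α : Matrix (Fin N) (Fin N) ℝ) (hα : BiStochastic α)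
    (v : Fin N → ℝ) : eucNorm (α.mulVec v) ≤ eucNorm v :=
  Real.sqrt_le_sqrt (contraction α hα v)

lemma mixConst_bddAbove {N : ℕ} (α : Matrix (Fin N) (Fin N) ℝ) (hα : BiStochastic α) :
    BddAbove {r : ℝ | ∃ v : Fin N → ℝ, eucNorm v = 1 ∧ (∑ i, v i) = 0 ∧
      r = eucNorm (α.mulVec v)} := by
  refine ⟨1, fun r hr => ?_⟩
  obtain ⟨v, hv1, _, rfl⟩ := hr
  calc eucNorm (α.mulVec v) ≤ eucNorm v := eucNorm_mulVec_le α hα v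
    _ = 1 := hv1

lemma eucNorm_smul {N : ℕ} (c : ℝ) (v : Fin N → ℝ) :
    eucNorm (c • v) = |c| * eucNorm v := by
  unfold eucNorm
  rw [← Real.sqrt_sq_eq_abs, ← Real.sqrt_mul (sq_nonneg c)]
  congr 1
  rw [Finset.mul_sum]
  exact Finset.sum_congr rfl fun i _ => by simp [mul_pow]

lemma mixConst_spec {N : ℕ} (α : Matrix (Fin N) (Fin N) ℝ) (hα : BiStochastic α)
    (v : Fin N → ℝ) (hv : ∑ i, v i = 0) :
    eucNorm (α.mulVec v) ≤ mixConst α * eucNorm v := by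
  rcases eq_or_lt_of_le (eucNorm_nonneg v) with h0 | h0
  · -- eucNorm v = 0 : all entries zero
    have hsum : ∑ i, v i ^ 2 = 0 := by
      have := eucNorm_sq v; rw [← h0] at this; simpa using this.symm
    have hz : ∀ i, v i = 0 := by
      intro i
      have := (Finset.sum_eq_zero_iff_of_nonneg
        (fun j _ => sq_nonneg (v j))).mp hsum i (Finset.mem_univ i)
      exact pow_eq_zero_iff (n := 2) (by norm_num) |>.mp this
    have hv0 : v = 0 := funext hz
    subst hv0
    simp [Matrix.mulVec_zero, eucNorm, ← h0]
  · set c := eucNorm v with hc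
    have hcne : c ≠ 0 := ne_of_gt h0
    set v' : Fin N → ℝ := c⁻¹ • v with hv'
    have hnorm : eucNorm v' = 1 := by
      rw [hv', eucNorm_smul, abs_of_pos (inv_pos.mpr h0), ← hc, inv_mul_cancel₀ hcne]
    have hsum' : ∑ i, v' i = 0 := by
      simp [hv', Pi.smul_apply, ← Finset.mul_sum, hv]
    have hmem : eucNorm (α.mulVec v') ∈ {r : ℝ | ∃ u : Fin N → ℝ, eucNorm u = 1 ∧
        (∑ i, u i) = 0 ∧ r = eucNorm (α.mulVec u)} := ⟨v', hnorm, hsum', rfl⟩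
    have hle : eucNorm (α.mulVec v') ≤ mixConst α :=
      le_csSup (mixConst_bddAbove α hα) hmem
    have heq : eucNorm (α.mulVec v') = c⁻¹ * eucNorm (α.mulVec v) := by
      rw [hv', Matrix.mulVec_smul, eucNorm_smul, abs_of_pos (inv_pos.mpr h0)]
    rw [heq] at hle
    calc eucNorm (α.mulVec v) = c * (c⁻¹ * eucNorm (α.mulVec v)) := by
          field_simp
      _ ≤ c * mixConst α := by
          apply mul_le_mul_of_nonneg_left hle (le_of_lt h0)
      _ = mixConst α * c := mul_comm _ _

lemma sum_sq_shift {N : ℕ} (hN : (0:ℝ) < (N:ℝ)) (x : Fin N → ℝ) (hx : ∑ i, x i = 0) :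
    ∑ i, (x i + 1/(N:ℝ)) ^ 2 = ∑ i, x i ^ 2 + 1/(N:ℝ) := by
  have hexp : ∀ i : Fin N, (x i + 1/(N:ℝ)) ^ 2
      = x i ^ 2 + (2/(N:ℝ)) * x i + (1/(N:ℝ)) ^ 2 := fun i => by ring
  simp only [hexp, Finset.sum_add_distrib, ← Finset.mul_sum, hx, mul_zero,
    Finset.sum_const, Finset.card_univ, Fintype.card_fin, nsmul_eq_mul]
  field_simp
  ring

theorem stmt0 {N : ℕ} (α : Matrix (Fin N) (Fin N) ℝ) (hα : BiStochastic α)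
    (w : Fin N → ℝ) (hw0 : ∀ i, 0 ≤ w i) (hw1 : ∑ i, w i = 1) :
    eucNorm (α.mulVec w) ^ 2 ≤ (1 - mixConst α ^ 2) / N + mixConst α ^ 2 * eucNorm w ^ 2 := by
  have hmix := mixConst_spec α hα
  obtain ⟨hpos, hrow, hcol⟩ := hα
  have hN : 0 < N := by
    by_contra h
    push_neg at h
    interval_cases N
    simp at hw1
  have hNR : (0:ℝ) < (N:ℝ) := Nat.cast_pos.mpr hN
  have hNne : (N:ℝ) ≠ 0 := ne_of_gt hNR
  set v : Fin N → ℝ := fun i => w i - 1/(N:ℝ) with hv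
  have hvsum : ∑ i, v i = 0 := by
    simp only [hv, Finset.sum_sub_distrib, hw1, Finset.sum_const, Finset.card_univ,
      Fintype.card_fin, nsmul_eq_mul]
    field_simp
    norm_num
  have hkey : ∀ i, α.mulVec w i = α.mulVec v i + 1/(N:ℝ) := by
    intro i
    simp only [Matrix.mulVec, dotProduct, hv, mul_sub, Finset.sum_sub_distrib,
      ← Finset.sum_mul, hrow i]
    ring
  have hwv : ∀ i, w i = v i + 1/(N:ℝ) := fun i => by simp [hv]
  have hsum_av : ∑ i, α.mulVec v i = 0 := by
    simp only [Matrix.mulVec, dotProduct]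
    rw [Finset.sum_comm]
    calc ∑ j, ∑ i, α i j * v j = ∑ j, (∑ i, α i j) * v j := by
          exact Finset.sum_congr rfl fun j _ => (Finset.sum_mul ..).symm
      _ = ∑ j, v j := by simp [hcol]
      _ = 0 := hvsum
  have h1 : ∑ i, α.mulVec w i ^ 2 = ∑ i, α.mulVec v i ^ 2 + 1/(N:ℝ) := by
    calc ∑ i, α.mulVec w i ^ 2 = ∑ i, (α.mulVec v i + 1/(N:ℝ)) ^ 2 :=
          Finset.sum_congr rfl fun i _ => by rw [hkey i]
      _ = ∑ i, α.mulVec v i ^ 2 + 1/(N:ℝ) := sum_sq_shift hNR _ hsum_av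
  have h2 : ∑ i, w i ^ 2 = ∑ i, v i ^ 2 + 1/(N:ℝ) := by
    calc ∑ i, w i ^ 2 = ∑ i, (v i + 1/(N:ℝ)) ^ 2 :=
          Finset.sum_congr rfl fun i _ => by rw [hwv i]
      _ = ∑ i, v i ^ 2 + 1/(N:ℝ) := sum_sq_shift hNR _ hvsum
  have hcontract : ∑ i, α.mulVec v i ^ 2 ≤ mixConst α ^ 2 * ∑ i, v i ^ 2 := by
    have h := hmix v hvsum
    have hsq : eucNorm (α.mulVec v) ^ 2 ≤ (mixConst α * eucNorm v) ^ 2 :=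
      pow_le_pow_left₀ (eucNorm_nonneg _) h 2
    rw [eucNorm_sq] at hsq
    calc ∑ i, α.mulVec v i ^ 2 ≤ (mixConst α * eucNorm v) ^ 2 := hsq
      _ = mixConst α ^ 2 * eucNorm v ^ 2 := by ring
      _ = mixConst α ^ 2 * ∑ i, v i ^ 2 := by rw [eucNorm_sq]
  rw [eucNorm_sq, eucNorm_sq, h1, h2]
  have : (1 - mixConst α ^ 2) / (N:ℝ) + mixConst α ^ 2 * (∑ i, v i ^ 2 + 1/(N:ℝ))
      = mixConst α ^ 2 * ∑ i, v i ^ 2 + 1/(N:ℝ) := by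
    field_simp
    ring
  rw [this]
  linarith [hcontract]
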